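/- Let H be a totally disconnected topological group and U₁, U₂ subgroups of H. The following are equivalent: (1) the functors of U₁-invariants and U₂-invariants coincide on the category of smooth H-representations over ℚ; (2) they coincide on the category of smooth H-sets; (3) every open subgroup of H containing U₁ contains U₂, and vice versa. -/

import Mathlib

set_option linter.unusedSectionVars false

section Aux

variable {H : Type} [Group H] [TopologicalSpace H] [IsTopologicalGroup H]

lemma linmul_apply {M : Type} [AddCommGroup M] [Module ℚ M]
    (e₁ e₂ : M ≃ₗ[ℚ] M) (x : M) : (e₁ * e₂) x = e₁ (e₂ x) := rfl

/-- The point stabilizers on `H ⧸ V` are open when `V` is open. -/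
lemma aux_stab_open (V : Subgroup H) (hV : IsOpen (V : Set H)) (x : H ⧸ V) :
    IsOpen {g : H | g • x = x} := by
  obtain ⟨g, rfl⟩ := QuotientGroup.mk_surjective x
  have hset : {h : H | h • (g : H ⧸ V) = g} = (fun h => g⁻¹ * h * g) ⁻¹' (V : Set H) := by
    ext h
    simp only [Set.mem_preimage, Set.mem_setOf_eq, SetLike.mem_coe]
    rw [show h • (g : H ⧸ V) = ((h * g : H) : H ⧸ V) from rfl, QuotientGroup.eq]
    constructor
    · intro hh
      have := inv_mem hh
      simpa [mul_assoc] using this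
    · intro hh
      have := inv_mem hh
      simpa [mul_assoc] using this
  rw [hset]
  exact hV.preimage (by continuity)

/-- Stabilizer of an element under a `Perm`-valued homomorphism, as a subgroup. -/
def permStab {W : Type} (ρ : H →* Equiv.Perm W) (w : W) : Subgroup H where
  carrier := {g | ρ g w = w}
  one_mem' := by simp
  mul_mem' := by
    intro a b ha hb
    simp only [Set.mem_setOf_eq, map_mul, Equiv.Perm.mul_apply] at *
    rw [hb, ha]
  inv_mem' := by
    intro a ha
    simp only [Set.mem_setOf_eq] at *
    nth_rewrite 1 [← ha]
    simp

lemma aux_back {W : Type} (U₁ U₂ : Subgroup H)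
    (hP : ∀ V : Subgroup H, IsOpen (V : Set H) → (U₁ ≤ V ↔ U₂ ≤ V))
    (ρ : H →* Equiv.Perm W) (hs : ∀ w : W, IsOpen {g : H | ρ g w = w}) :
    {w : W | ∀ g ∈ U₁, ρ g w = w} = {w : W | ∀ g ∈ U₂, ρ g w = w} := by
  ext w
  have h1 : (∀ g ∈ U₁, ρ g w = w) ↔ U₁ ≤ permStab ρ w := Iff.rfl
  have h2 : (∀ g ∈ U₂, ρ g w = w) ↔ U₂ ≤ permStab ρ w := Iff.rfl
  simp only [Set.mem_setOf_eq, h1, h2]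
  exact hP (permStab ρ w) (hs w)

/-- Linear equivalences to permutations as a monoid hom. -/
def linToPerm (V : Type) [AddCommGroup V] [Module ℚ V] :
    (V ≃ₗ[ℚ] V) →* Equiv.Perm V where
  toFun e := e.toEquiv
  map_one' := rfl
  map_mul' _ _ := rfl

end Aux

/-- For subgroups `U₁, U₂` of a totally disconnected topological group `H`, the
`U₁`- and `U₂`-invariants functors coincide on smooth `ℚ`-linear representations
iff they coincide on smooth `H`-sets iff every open subgroup containing one of
`U₁, U₂` contains the other. -/
theorem stmt3 {H : Type} [Group H] [TopologicalSpace H] [IsTopologicalGroup H]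
    [TotallyDisconnectedSpace H] (U₁ U₂ : Subgroup H) :
    ((∀ (V : Type) [AddCommGroup V] [Module ℚ V], ∀ ρ : H →* (V ≃ₗ[ℚ] V),
        (∀ w : V, IsOpen {g : H | ρ g w = w}) →
        {w : V | ∀ g ∈ U₁, ρ g w = w} = {w : V | ∀ g ∈ U₂, ρ g w = w}) ↔
      (∀ V : Subgroup H, IsOpen (V : Set H) → (U₁ ≤ V ↔ U₂ ≤ V))) ∧
    ((∀ (W : Type), ∀ ρ : H →* Equiv.Perm W,
        (∀ w : W, IsOpen {g : H | ρ g w = w}) →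
        {w : W | ∀ g ∈ U₁, ρ g w = w} = {w : W | ∀ g ∈ U₂, ρ g w = w}) ↔
      (∀ V : Subgroup H, IsOpen (V : Set H) → (U₁ ≤ V ↔ U₂ ≤ V))) := by
  constructor
  · constructor
    · -- rep condition → open subgroup condition
      intro hrep V hV
      set σ : H →* ((H ⧸ V →₀ ℚ) ≃ₗ[ℚ] (H ⧸ V →₀ ℚ)) :=
        { toFun := fun g => Finsupp.domLCongr (MulAction.toPerm g)
          map_one' := by
            ext f x
            simp [Finsupp.domLCongr, Finsupp.equivMapDomain]
          map_mul' := by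
            intro a b
            ext f x
            rw [linmul_apply]
            simp [Finsupp.domLCongr, Finsupp.equivMapDomain, mul_smul] } with hσ
      have happ : ∀ (g : H) (f : H ⧸ V →₀ ℚ) (x : H ⧸ V), σ g f x = f (g⁻¹ • x) := by
        intro g f x
        simp [hσ, Finsupp.domLCongr, Finsupp.equivMapDomain]
      have hsm : ∀ f : H ⧸ V →₀ ℚ, IsOpen {g : H | σ g f = f} := by
        intro f
        set S : Subgroup H :=
          { carrier := {g | σ g f = f}
            one_mem' := by simp
            mul_mem' := by
              intro a b ha hb
              simp only [Set.mem_setOf_eq, map_mul] at *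
              rw [linmul_apply, hb, ha]
            inv_mem' := by
              intro a ha
              simp only [Set.mem_setOf_eq] at *
              nth_rewrite 1 [← ha]
              rw [← linmul_apply, ← map_mul]
              simp } with hS
        have hTle : (⨅ x ∈ f.support, MulAction.stabilizer H x) ≤ S := by
          intro h hh
          simp only [Subgroup.mem_iInf, MulAction.mem_stabilizer_iff] at hh
          show σ h f = f
          ext x
          rw [happ]
          by_cases hx : h⁻¹ • x ∈ f.support
          · have hthis := hh _ hx
            have hx2 : h⁻¹ • x = x := by
              conv_rhs => rw [← smul_inv_smul h x, hthis]
            rw [hx2]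
          · by_cases hx' : x ∈ f.support
            · have hthis := hh _ hx'
              have hx2 : h⁻¹ • x = x := by rw [inv_smul_eq_iff]; exact hthis.symm
              rw [hx2]
            · rw [Finsupp.notMem_support_iff.mp hx, Finsupp.notMem_support_iff.mp hx']
        have hTopen : IsOpen ((⨅ x ∈ f.support, MulAction.stabilizer H x : Subgroup H) : Set H) := by
          have heq : ((⨅ x ∈ f.support, MulAction.stabilizer H x : Subgroup H) : Set H)
              = ⋂ x ∈ f.support, (MulAction.stabilizer H x : Set H) := by
            simp [Subgroup.coe_iInf]
          rw [heq]
          apply isOpen_biInter_finset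
          intro x _
          exact aux_stab_open V hV x
        exact Subgroup.isOpen_mono hTle hTopen
      have hkey := hrep (H ⧸ V →₀ ℚ) σ hsm
      have hfix : ∀ (U : Subgroup H),
          (Finsupp.single ((1:H) : H ⧸ V) (1 : ℚ)) ∈ {w : H ⧸ V →₀ ℚ | ∀ g ∈ U, σ g w = w}
          ↔ U ≤ V := by
        intro U
        classical
        simp only [Set.mem_setOf_eq]
        constructor
        · intro hfx g hg
          have h0 := hfx g hg
          have h1 : σ g (Finsupp.single ((1:H) : H ⧸ V) 1) ((1:H) : H ⧸ V) = 1 := by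
            rw [h0]; simp
          rw [happ, Finsupp.single_apply] at h1
          by_contra hgV
          have hne : ((1:H) : H ⧸ V) ≠ g⁻¹ • ((1:H) : H ⧸ V) := by
            intro hc
            apply hgV
            have hc2 : ((1:H) : H ⧸ V) = ((g⁻¹ * 1 : H) : H ⧸ V) := hc
            rw [mul_one] at hc2
            have := (QuotientGroup.eq (s := V)).mp hc2
            simpa using this
          rw [if_neg hne] at h1
          exact one_ne_zero h1.symm
        · intro hUV g hg
          have hgV : g ∈ V := hUV hg
          ext x
          obtain ⟨a, rfl⟩ := QuotientGroup.mk_surjective x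
          rw [happ, Finsupp.single_apply, Finsupp.single_apply]
          have hcond : (((1:H) : H ⧸ V) = g⁻¹ • (a : H ⧸ V)) ↔ (((1:H) : H ⧸ V) = (a : H ⧸ V)) := by
            rw [show g⁻¹ • (a : H ⧸ V) = ((g⁻¹ * a : H) : H ⧸ V) from rfl]
            rw [show ((1:H) : H ⧸ V) = ((1 : H) : H ⧸ V) from rfl]
            rw [QuotientGroup.eq, QuotientGroup.eq]
            simp [V.mul_mem_cancel_left (inv_mem hgV)]
          simp only [hcond]
      constructor
      · intro h1
        exact (hfix U₂).mp (by rw [← hkey]; exact (hfix U₁).mpr h1)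
      · intro h2
        exact (hfix U₁).mp (by rw [hkey]; exact (hfix U₂).mpr h2)
    · intro hP V _ _ ρ hs
      exact aux_back U₁ U₂ hP ((linToPerm V).comp ρ) hs
  · constructor
    · intro hset V hV
      set ρ : H →* Equiv.Perm (H ⧸ V) := MulAction.toPermHom H (H ⧸ V) with hρ
      have hsm : ∀ w : H ⧸ V, IsOpen {g : H | ρ g w = w} := fun w => aux_stab_open V hV w
      have hkey := hset (H ⧸ V) ρ hsm
      have hfix : ∀ (U : Subgroup H),
          (((1:H) : H ⧸ V) ∈ {w : H ⧸ V | ∀ g ∈ U, ρ g w = w}) ↔ U ≤ V := by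
        intro U
        simp only [Set.mem_setOf_eq]
        constructor
        · intro hfx g hg
          have h0 : g • ((1:H) : H ⧸ V) = ((1:H) : H ⧸ V) := hfx g hg
          rw [show g • ((1:H) : H ⧸ V) = ((g * 1 : H) : H ⧸ V) from rfl] at h0
          have := (QuotientGroup.eq (s := V)).mp h0
          simpa using this
        · intro hUV g hg
          have hgV : g ∈ V := hUV hg
          show g • ((1:H) : H ⧸ V) = ((1:H) : H ⧸ V)
          rw [show g • ((1:H) : H ⧸ V) = ((g * 1 : H) : H ⧸ V) from rfl]
          rw [QuotientGroup.eq]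
          simpa using inv_mem hgV
      constructor
      · intro h1
        exact (hfix U₂).mp (by rw [← hkey]; exact (hfix U₁).mpr h1)
      · intro h2
        exact (hfix U₁).mp (by rw [hkey]; exact (hfix U₂).mpr h2)
    · intro hP W ρ hs
      exact aux_back U₁ U₂ hP ρ hs
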